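/- Define f : [0,∞) → ℝ by f(b) = b − √(2b²/(b²+2)). Then f is strictly increasing on [0,∞), and for every b with 0 < b ≤ 1 one has the two-sided cubic bound b³/8 ≤ f(b) ≤ b³/4. In particular, for every sufficiently small a > 0 the equation f(b) = a has a unique nonnegative solution b, and this solution satisfies (4a)^{1/3} ≤ b ≤ (8a)^{1/3}. -/

import Mathlib

noncomputable def fStat (b : ℝ) : ℝ := b - Real.sqrt (2 * b ^ 2 / (b ^ 2 + 2))

lemma fStat_eq (b : ℝ) (hb : 0 ≤ b) :
    fStat b = b - Real.sqrt 2 * b / Real.sqrt (b ^ 2 + 2) := by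
  unfold fStat
  rw [Real.sqrt_div (by positivity), Real.sqrt_mul (by norm_num), Real.sqrt_sq hb]

lemma fStat_mono : StrictMonoOn fStat (Set.Ici 0) := by
  intro x hx y hy hxy
  simp only [Set.mem_Ici] at hx hy
  rw [fStat_eq x hx, fStat_eq y hy]
  set r := Real.sqrt 2 with hrdef
  set s1 := Real.sqrt (x ^ 2 + 2) with hs1def
  set s2 := Real.sqrt (y ^ 2 + 2) with hs2def
  have hr : 0 < r := Real.sqrt_pos.2 (by norm_num)
  have hr2 : r ^ 2 = 2 := Real.sq_sqrt (by norm_num)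
  have hs1 : 0 < s1 := Real.sqrt_pos.2 (by positivity)
  have hs2 : 0 < s2 := Real.sqrt_pos.2 (by positivity)
  have hs1sq : s1 ^ 2 = x ^ 2 + 2 := Real.sq_sqrt (by positivity)
  have hs2sq : s2 ^ 2 = y ^ 2 + 2 := Real.sq_sqrt (by positivity)
  have hrs1 : r ≤ s1 := Real.sqrt_le_sqrt (by nlinarith)
  have hrs2 : r ≤ s2 := Real.sqrt_le_sqrt (by nlinarith)
  have hy0 : 0 < y := lt_of_le_of_lt hx hxy
  have e1 : x - r * x / s1 = (x * s1 - r * x) / s1 := by field_simp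
  have e2 : y - r * y / s2 = (y * s2 - r * y) / s2 := by field_simp
  rw [e1, e2, div_lt_div_iff₀ hs1 hs2]
  have hA : 2 < s1 * s2 := by nlinarith [mul_pos hs1 hs2]
  have hP : 0 < y * s1 + x * s2 := by positivity
  have hC : (y * s1) ^ 2 - (x * s2) ^ 2 = 2 * (y ^ 2 - x ^ 2) := by
    rw [mul_pow, mul_pow, hs1sq, hs2sq]; ring
  have hD : r * (x + y) ≤ y * s1 + x * s2 := by nlinarith
  have hE : r * (y * s1 - x * s2) ≤ 2 * (y - x) := by
    nlinarith [mul_le_mul_of_nonneg_right hD (le_of_lt (sub_pos.2 hxy)), mul_pos hP hr]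
  nlinarith [mul_pos (sub_pos.2 hA) (sub_pos.2 hxy)]

lemma fStat_cubic (b : ℝ) (hb : 0 < b) (hb1 : b ≤ 1) :
    b ^ 3 / 8 ≤ fStat b ∧ fStat b ≤ b ^ 3 / 4 := by
  set r := Real.sqrt 2 with hrdef
  set s := Real.sqrt (b ^ 2 + 2) with hsdef
  have hr : 0 < r := Real.sqrt_pos.2 (by norm_num)
  have hr2 : r ^ 2 = 2 := Real.sq_sqrt (by norm_num)
  have hs : 0 < s := Real.sqrt_pos.2 (by positivity)
  have hssq : s ^ 2 = b ^ 2 + 2 := Real.sq_sqrt (by positivity)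
  have hrs : r ≤ s := Real.sqrt_le_sqrt (by nlinarith)
  have hs2 : s ≤ 2 := by nlinarith [hssq, hs]
  have hr2' : r ≤ 2 := le_trans hrs hs2
  have key : fStat b = b ^ 3 / (s * (s + r)) := by
    rw [fStat_eq b hb.le]
    have hsr : 0 < s + r := by positivity
    field_simp
    linear_combination s * hssq - s * hr2
  rw [key]
  constructor
  · rw [div_le_div_iff₀ (by norm_num) (by positivity)]
    nlinarith [pow_pos hb 3, mul_le_mul hs2 hs2 hs.le (by norm_num : (0:ℝ) ≤ 2),
      mul_le_mul hs2 hr2' hr.le (by norm_num : (0:ℝ) ≤ 2)]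
  · rw [div_le_div_iff₀ (by positivity) (by norm_num)]
    nlinarith [pow_pos hb 3, mul_le_mul hrs hrs hr.le hs.le,
      mul_le_mul_of_nonneg_right hrs hr.le, hr2]

lemma fStat_cont : Continuous fStat := by
  unfold fStat
  fun_prop (disch := intros; positivity)

lemma fStat_zero : fStat 0 = 0 := by unfold fStat; norm_num

lemma fStat_one_pos : 0 < fStat 1 := by
  unfold fStat
  have : Real.sqrt (2 * 1 ^ 2 / (1 ^ 2 + 2)) < 1 := by
    rw [show (2 * 1 ^ 2 / (1 ^ 2 + 2) : ℝ) = 2/3 by norm_num]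
    rw [show (1:ℝ) = Real.sqrt 1 by simp]
    exact Real.sqrt_lt_sqrt (by norm_num) (by norm_num)
  linarith

lemma cube_root_cube (b : ℝ) (hb : 0 ≤ b) : (b ^ 3 : ℝ) ^ ((1:ℝ)/3) = b := by
  rw [← Real.rpow_natCast b 3, ← Real.rpow_mul hb]
  norm_num

theorem stationary_equation_solvability :
    StrictMonoOn fStat (Set.Ici 0) ∧
    (∀ b : ℝ, 0 < b → b ≤ 1 → b ^ 3 / 8 ≤ fStat b ∧ fStat b ≤ b ^ 3 / 4) ∧
    (∃ a₀ : ℝ, 0 < a₀ ∧ ∀ a : ℝ, 0 < a → a ≤ a₀ →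
      (∃! b : ℝ, 0 ≤ b ∧ fStat b = a) ∧
      (∀ b : ℝ, 0 ≤ b → fStat b = a →
        (4 * a) ^ ((1 : ℝ) / 3) ≤ b ∧ b ≤ (8 * a) ^ ((1 : ℝ) / 3))) := by
  refine ⟨fStat_mono, fun b hb hb1 => fStat_cubic b hb hb1, fStat 1, fStat_one_pos, ?_⟩
  intro a ha ha0
  -- a solution exists in [0,1]
  have hivt : a ∈ Set.Icc (fStat 0) (fStat 1) := by
    rw [fStat_zero]; exact ⟨ha.le, ha0⟩
  obtain ⟨b, hbmem, hfb⟩ :=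
    intermediate_value_Icc (by norm_num : (0:ℝ) ≤ 1) fStat_cont.continuousOn hivt
  obtain ⟨hb0, hb1⟩ := hbmem
  -- any nonnegative solution lies in (0, 1] and satisfies the cubic bounds
  have bound : ∀ c : ℝ, 0 ≤ c → fStat c = a →
      (4 * a) ^ ((1 : ℝ) / 3) ≤ c ∧ c ≤ (8 * a) ^ ((1 : ℝ) / 3) := by
    intro c hc0 hfc
    have hcpos : 0 < c := by
      rcases hc0.lt_or_eq with h | h
      · exact h
      · exfalso; rw [← h, fStat_zero] at hfc; linarith
    have hc1 : c ≤ 1 := by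
      by_contra h
      push_neg at h
      have := fStat_mono (Set.mem_Ici.2 (by norm_num : (0:ℝ) ≤ 1))
        (Set.mem_Ici.2 hc0) h
      linarith [hfc ▸ this]
    obtain ⟨hlow, hhigh⟩ := fStat_cubic c hcpos hc1
    rw [hfc] at hlow hhigh
    -- 4a ≤ c^3 ≤ 8a
    have h4 : 4 * a ≤ c ^ 3 := by linarith
    have h8 : c ^ 3 ≤ 8 * a := by linarith
    constructor
    · calc (4 * a) ^ ((1:ℝ)/3) ≤ (c ^ 3) ^ ((1:ℝ)/3) :=
            Real.rpow_le_rpow (by positivity) h4 (by norm_num)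
        _ = c := cube_root_cube c hc0
    · calc c = (c ^ 3) ^ ((1:ℝ)/3) := (cube_root_cube c hc0).symm
        _ ≤ (8 * a) ^ ((1:ℝ)/3) :=
            Real.rpow_le_rpow (by positivity) h8 (by norm_num)
  refine ⟨⟨b, ⟨hb0, hfb⟩, ?_⟩, bound⟩
  rintro c ⟨hc0, hfc⟩
  exact fStat_mono.injOn (Set.mem_Ici.2 hc0) (Set.mem_Ici.2 hb0) (hfc.trans hfb.symm)
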